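/- arXiv:1711.02537 — 4 statements merged into one kernel-verified Lean document; each statement's English description precedes it below -/
import Mathlib

section
/- With α_{n+1} = p_{n+1}/q_{n+1}, where p_{n+1} = k·l·q·p + 1 and q_{n+1} = k·l·q², and m = (k·l)/2 (assuming k·l is even), and r = m·p mod q, one has m · α_{n+1} = r/q + 1/(2q²) modulo 1 (i.e., m·α_{n+1} − r/q − 1/(2q²) is an integer). -/
theorem stmt_1 (p q k l m r : ℕ) (hp : 0 < p) (hq : 0 < q) (hk : 0 < k) (hl : 0 < l)
    (heven : 2 ∣ k * l) (hm : m = k * l / 2) (hr : r < q) (hrq : r ≡ m * p [MOD q]) :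
    ∃ z : ℤ, (m : ℚ) * ((k * l * q * p + 1 : ℕ) / (k * l * q ^ 2 : ℕ))
      - (r : ℚ) / q - 1 / (2 * q ^ 2) = z := by
  obtain ⟨t, ht⟩ := heven
  have hkl : k * l = 2 * m := by omega
  have hm0 : 0 < m := by nlinarith
  obtain ⟨c, hc⟩ : (q : ℤ) ∣ (m * p - r : ℤ) := hrq.dvd
  refine ⟨c, ?_⟩
  have hq0 : (q : ℚ) ≠ 0 := by positivity
  have hm0' : (m : ℚ) ≠ 0 := by positivity
  have hc' : (m : ℚ) * p - r = q * c := by exact_mod_cast hc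
  push_cast [hkl]
  field_simp
  linear_combination (2*(q:ℚ)) * hc'
end

section
/- With the same setup, (m+1) · α_{n+1} = (r+p)/q + 1/(2q²) + 1/q' modulo 1, where q' = k·l·q². -/
theorem stmt_2 (p q k l m r : ℕ) (hp : 0 < p) (hq : 0 < q) (hk : 0 < k) (hl : 0 < l)
    (heven : 2 ∣ k * l) (hco : Nat.Coprime p q) (hm : m = k * l / 2) (hr : r < q)
    (hrq : r ≡ m * p [MOD q]) :
    ∃ z : ℤ, ((m : ℚ) + 1) * ((k * l * q * p + 1 : ℕ) / (k * l * q ^ 2 : ℕ))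
      - ((r : ℚ) + p) / q - 1 / (2 * q ^ 2) - 1 / (k * l * q ^ 2 : ℕ) = z := by
  obtain ⟨t, ht⟩ : (q : ℤ) ∣ (m * p - r) := hrq.dvd
  have hkl : (k * l : ℕ) = 2 * m := by omega
  have hm0 : 0 < m := by
    have h1 : 0 < k * l := Nat.mul_pos hk hl
    omega
  refine ⟨t, ?_⟩
  have hq' : (q : ℚ) ≠ 0 := by positivity
  have hm' : (m : ℚ) ≠ 0 := by positivity
  have ht' : (m : ℚ) * p - r = q * t := by exact_mod_cast congrArg (Int.cast : ℤ → ℚ) ht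
  push_cast [hkl]
  field_simp
  linear_combination (2 * (m:ℚ) * q) * ht'
end

section
/- Let T admit a good cyclic approximation, i.e., there exist cyclic towers with single tower of height h_n, partitions ξ_n → ε (converging to the decomposition into points), and ∑_{c∈ξ_n} μ(T(c) Δ σ_n(c)) = o(1/h_n). Then T is ergodic. -/
open MeasureTheory Filter ENNReal

section AuxiliaryLemmas
open Finset

lemma zmodCount (h : ℕ) [NeZero h] (t : Finset (ZMod h)) :
    ∑ b : ZMod h, (t ∩ t.image (· + b)).card = t.card ^ 2 := by
  have key : ∀ b : ZMod h, t ∩ t.image (· + b) = t.filter (fun a => a - b ∈ t) := by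
    intro b
    ext a
    simp only [mem_inter, mem_image, mem_filter]
    constructor
    · rintro ⟨ha, x, hx, rfl⟩; simpa using ⟨ha, hx⟩
    · rintro ⟨ha, hx⟩; exact ⟨ha, a - b, hx, by ring⟩
  simp only [key, card_filter]
  rw [Finset.sum_comm]
  have : ∀ a : ZMod h, (∑ b : ZMod h, if a - b ∈ t then 1 else 0) = t.card := by
    intro a
    rw [← card_filter]
    have : Finset.univ.filter (fun b => a - b ∈ t) = t.image (fun x => a - x) := by
      ext b
      simp only [mem_filter, mem_univ, true_and, mem_image]
      constructor
      · intro hb; exact ⟨a - b, hb, by ring⟩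
      · rintro ⟨x, hx, rfl⟩; simpa using hx
    rw [this, card_image_of_injective _ (fun x y hxy => by
      have : a - x = a - y := hxy
      linear_combination -this)]
  rw [Finset.sum_congr rfl (fun a _ => this a), Finset.sum_const, smul_eq_mul, sq]

lemma natCount (h : ℕ) (hh : 0 < h) (s : Finset ℕ) (hs : s ⊆ Finset.range h) :
    ∑ j ∈ Finset.range h, (s ∩ s.image (fun i => (i + j) % h)).card = s.card ^ 2 := by
  haveI : NeZero h := ⟨hh.ne'⟩
  have hinj : Set.InjOn (fun i : ℕ => (i : ZMod h)) (Finset.range h : Set ℕ) := by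
    intro x hx y hy hxy
    have hx' : x < h := by simpa using hx
    have hy' : y < h := by simpa using hy
    have := congrArg ZMod.val hxy
    rwa [ZMod.val_cast_of_lt hx', ZMod.val_cast_of_lt hy'] at this
  set φ : ℕ → ZMod h := fun i => (i : ZMod h) with hφ
  set t : Finset (ZMod h) := s.image φ with ht
  have hcard : t.card = s.card := card_image_of_injOn (hinj.mono (by exact_mod_cast hs))
  have keyterm : ∀ j ∈ Finset.range h,
      (s ∩ s.image (fun i => (i + j) % h)).card = (t ∩ t.image (· + (j : ZMod h))).card := by
    intro j hj
    have hsub : (s ∩ s.image (fun i => (i + j) % h)) ⊆ Finset.range h := fun x hx =>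
      hs (mem_inter.1 hx).1
    rw [← card_image_of_injOn (hinj.mono (by exact_mod_cast hsub)) (f := φ)]
    congr 1
    rw [Finset.image_inter_of_injOn _ _ (hinj.mono ?side1), image_image]
    · congr 1
      ext b
      simp only [mem_image, Function.comp]
      constructor
      · rintro ⟨x, hx, rfl⟩
        exact ⟨φ x, mem_image_of_mem _ hx, by simp only [hφ, ZMod.natCast_mod]; push_cast; ring⟩
      · rintro ⟨y, hy, rfl⟩
        obtain ⟨x, hx, rfl⟩ := mem_image.1 hy
        exact ⟨x, hx, by simp only [hφ, ZMod.natCast_mod]; push_cast; ring⟩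
    · case side1 =>
        intro x hx
        rcases (Set.mem_union _ _ _).1 hx with hx | hx
        · exact_mod_cast hs (by exact_mod_cast hx)
        · obtain ⟨y, hy, rfl⟩ := mem_image.1 (by exact_mod_cast hx)
          simp [Nat.mod_lt _ hh]
  rw [Finset.sum_congr rfl keyterm, ← hcard, ← zmodCount h t]
  exact Finset.sum_nbij' (fun j => (j : ZMod h)) (fun b => b.val)
    (fun j _ => mem_univ _) (fun b _ => by simpa using b.val_lt)
    (fun j hj => ZMod.val_cast_of_lt (by simpa using hj))
    (fun b _ => by simp [ZMod.natCast_val, ZMod.cast_id])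
    (fun j _ => rfl)


lemma existsShift (h : ℕ) (hh : 0 < h) (s : Finset ℕ) (hs : s ⊆ Finset.range h)
    (hcnt : ∑ j ∈ Finset.range h, (s ∩ s.image (fun i => (i + j) % h)).card = s.card ^ 2) :
    ∃ j ∈ Finset.range h, h * (s ∩ s.image (fun i => (i + j) % h)).card ≤ s.card ^ 2 := by
  by_contra hcon
  push_neg at hcon
  have : h * s.card ^ 2 < h * (s.card ^ 2 + 1) := by nlinarith
  have hsum : h * (s.card ^ 2 + 1) ≤ ∑ j ∈ Finset.range h, h * (s ∩ s.image (fun i => (i + j) % h)).card := by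
    calc h * (s.card ^ 2 + 1) = ∑ _j ∈ Finset.range h, (s.card ^ 2 + 1) := by
          rw [Finset.sum_const, card_range, smul_eq_mul]
      _ ≤ _ := Finset.sum_le_sum (fun j hj => hcon j hj)
  rw [← Finset.mul_sum, hcnt] at hsum
  omega

lemma symmDiff_biUnion_subset {X : Type*} (t : Finset ℕ) (A B : ℕ → Set X) :
    symmDiff (⋃ i ∈ t, A i) (⋃ i ∈ t, B i) ⊆ ⋃ i ∈ t, symmDiff (A i) (B i) := by
  intro x hx
  rcases Set.mem_symmDiff.1 hx with ⟨h1, h2⟩ | ⟨h1, h2⟩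
  · obtain ⟨i, hi, hxi⟩ := Set.mem_iUnion₂.1 h1
    refine Set.mem_iUnion₂.2 ⟨i, hi, ?_⟩
    exact Set.mem_symmDiff.2 (Or.inl ⟨hxi, fun hb => h2 (Set.mem_iUnion₂.2 ⟨i, hi, hb⟩)⟩)
  · obtain ⟨i, hi, hxi⟩ := Set.mem_iUnion₂.1 h1
    refine Set.mem_iUnion₂.2 ⟨i, hi, ?_⟩
    exact Set.mem_symmDiff.2 (Or.inr ⟨hxi, fun hb => h2 (Set.mem_iUnion₂.2 ⟨i, hi, hb⟩)⟩)

lemma measure_symmDiff_triangle {X : Type*} [MeasurableSpace X] (μ : Measure X)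
    (A B C : Set X) : μ (symmDiff A C) ≤ μ (symmDiff A B) + μ (symmDiff B C) :=
  le_trans (measure_mono (symmDiff_triangle A B C)) (measure_union_le _ _)

lemma toReal_diff_le {X : Type*} [MeasurableSpace X] (μ : Measure X) [IsProbabilityMeasure μ]
    (A B : Set X) : |(μ A).toReal - (μ B).toReal| ≤ (μ (symmDiff A B)).toReal := by
  have hA := measure_ne_top μ A
  have hB := measure_ne_top μ B
  have hD := measure_ne_top μ (symmDiff A B)
  rw [abs_sub_le_iff]
  constructor
  · have : μ A ≤ μ B + μ (symmDiff A B) := by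
      refine le_trans (measure_mono ?_) (measure_union_le _ _)
      intro x hx
      by_cases hb : x ∈ B
      · exact Or.inl hb
      · exact Or.inr (Set.mem_symmDiff.2 (Or.inl ⟨hx, hb⟩))
    have := ENNReal.toReal_mono (by finiteness) this
    rw [ENNReal.toReal_add hB hD] at this
    linarith
  · have : μ B ≤ μ A + μ (symmDiff A B) := by
      refine le_trans (measure_mono ?_) (measure_union_le _ _)
      intro x hx
      by_cases hb : x ∈ A
      · exact Or.inl hb
      · exact Or.inr (Set.mem_symmDiff.2 (Or.inr ⟨hx, hb⟩))
    have := ENNReal.toReal_mono (by finiteness) this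
    rw [ENNReal.toReal_add hA hD] at this
    linarith



end AuxiliaryLemmas


/-- `T` admits a good cyclic approximation: there are single towers of heights `h n`
(disjoint levels of equal measure `1/h n` covering the space), whose levels generate
the full σ-algebra in measure (`ξ_n → ε`), and the cyclic permutation `σ_n`
(sending level `i` to level `i+1 mod h n`) approximates `T` with speed `o(1/h n)`. -/
def GoodCyclicApproximation {X : Type*} [MeasurableSpace X] (μ : Measure X)
    (T : X → X) : Prop :=
  ∃ (h : ℕ → ℕ) (c : ℕ → ℕ → Set X),
    (∀ n, 0 < h n) ∧
    Tendsto h atTop atTop ∧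
    (∀ n i, i < h n → MeasurableSet (c n i)) ∧
    (∀ n i j, i < h n → j < h n → i ≠ j → Disjoint (c n i) (c n j)) ∧
    (∀ n i, i < h n → μ (c n i) = 1 / (h n : ℝ≥0∞)) ∧
    -- ξ_n → ε : every measurable set is approximated by unions of levels
    (∀ A : Set X, MeasurableSet A → ∀ ε : ℝ, 0 < ε → ∀ᶠ n in atTop,
      ∃ s : Finset ℕ, (μ (symmDiff A (⋃ i ∈ s.filter (· < h n), c n i))).toReal < ε) ∧
    -- speed of approximation o(1/h n)
    Tendsto
      (fun n => (h n : ℝ) *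
        ∑ i ∈ Finset.range (h n), (μ (symmDiff (T '' c n i) (c n ((i + 1) % h n)))).toReal)
      atTop (nhds 0)


open Finset in
set_option maxHeartbeats 2000000 in
theorem stmt_10 {X : Type*} [MeasurableSpace X] (μ : Measure X) [IsProbabilityMeasure μ]
    (T S : X → X) (hT : MeasurePreserving T μ μ) (hS : MeasurePreserving S μ μ)
    (hST : Function.LeftInverse S T) (hTS : Function.RightInverse S T)
    (happrox : GoodCyclicApproximation μ T) :
    Ergodic T μ := by
  obtain ⟨h, c, hpos, htop, hmeas, hdisj, hmeasure, hxi, hspeed⟩ := happrox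
  refine ⟨hT, ⟨fun A hAmeas hAinv => ?_⟩⟩
  have himg : Set.image T = Set.preimage S := Set.image_eq_preimage_of_inverse hST hTS
  have hSA : S ⁻¹' A = A := by
    calc S ⁻¹' A = T '' A := (congrFun himg A).symm
      _ = T '' (T ⁻¹' A) := by rw [hAinv]
      _ = A := Set.image_preimage_eq A hTS.surjective
  have hSiter : ∀ j : ℕ, (S^[j]) ⁻¹' A = A := by
    intro j
    induction j with
    | zero => simp
    | succ j ih =>
      rw [Function.iterate_succ, Set.preimage_comp, ih, hSA]
  set a : ℝ := (μ A).toReal with ha_def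
  have ha0 : 0 ≤ a := ENNReal.toReal_nonneg
  have ha1 : a ≤ 1 := by
    rw [ha_def, ← ENNReal.toReal_one]
    exact ENNReal.toReal_mono one_ne_top prob_le_one
  have key : ∀ ε : ℝ, 0 < ε → 2 * a - 2 * a ^ 2 < 5 * ε := by
    intro ε hε

    -- instantiate approximation at level n
    have hev2 : ∀ᶠ n in atTop, (h n : ℝ) * ∑ i ∈ Finset.range (h n),
        (μ (symmDiff (T '' c n i) (c n ((i + 1) % h n)))).toReal < ε :=
      hspeed.eventually (gt_mem_nhds hε)
    obtain ⟨n, ⟨s0, hs0⟩, hsp⟩ := ((hxi A hAmeas ε hε).and hev2).exists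
    simp only [himg] at hsp
    set H := h n with hH_def
    have hH : 0 < H := hpos n
    set s : Finset ℕ := s0.filter (· < H) with hs_def
    have hs_sub : s ⊆ Finset.range H := fun i hi => mem_range.2 (mem_filter.1 hi).2
    set U : Set X := ⋃ i ∈ s, c n i with hU_def
    -- measure of unions of levels
    have hsubmeas : ∀ t : Finset ℕ, t ⊆ Finset.range H → MeasurableSet (⋃ i ∈ t, c n i) :=
      fun t ht => Finset.measurableSet_biUnion t (fun i hi => hmeas n i (mem_range.1 (ht hi)))
    have hμt : ∀ t : Finset ℕ, t ⊆ Finset.range H →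
        μ (⋃ i ∈ t, c n i) = t.card / (H : ℝ≥0∞) := by
      intro t ht
      have hdisj' : (↑t : Set ℕ).PairwiseDisjoint (c n) := fun i hi j hj hij =>
        hdisj n i j (mem_range.1 (ht (Finset.mem_coe.1 hi)))
          (mem_range.1 (ht (Finset.mem_coe.1 hj))) hij
      rw [measure_biUnion_finset hdisj' (fun i hi => hmeas n i (mem_range.1 (ht hi))),
        Finset.sum_congr rfl (fun i hi => hmeasure n i (mem_range.1 (ht hi))),
        Finset.sum_const, nsmul_eq_mul, one_div, ← div_eq_mul_inv]
    have hμtR : ∀ t : Finset ℕ, t ⊆ Finset.range H →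
        (μ (⋃ i ∈ t, c n i)).toReal = (t.card : ℝ) / (H : ℝ) := by
      intro t ht
      rw [hμt t ht, ENNReal.toReal_div, ENNReal.toReal_natCast, ENNReal.toReal_natCast]
    -- shifted index sets and shifted unions
    set sh : ℕ → Finset ℕ := fun j => s.image (fun i => (i + j) % H) with hsh_def
    have hsh_sub : ∀ j, sh j ⊆ Finset.range H := by
      intro j x hx
      obtain ⟨i, _, rfl⟩ := mem_image.1 hx
      exact mem_range.2 (Nat.mod_lt _ hH)
    set V : ℕ → Set X := fun j => ⋃ i ∈ sh j, c n i with hV_def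
    have hUmeas : MeasurableSet U := hsubmeas s hs_sub
    have hVmeas : ∀ j, MeasurableSet (V j) := fun j => hsubmeas _ (hsh_sub j)
    -- the approximation error
    set Δ : ℝ≥0∞ := ∑ i ∈ Finset.range H, μ (symmDiff (S ⁻¹' (c n i)) (c n ((i + 1) % H)))
      with hΔ_def
    have hΔ_ne : Δ ≠ ⊤ := by
      rw [hΔ_def]
      exact (ENNReal.sum_lt_top.2 fun i _ => measure_lt_top μ _).ne
    have hΔR : (H : ℝ) * Δ.toReal < ε := by
      have hΔtr : Δ.toReal = ∑ i ∈ Finset.range H,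
          (μ (symmDiff (S ⁻¹' (c n i)) (c n ((i + 1) % H)))).toReal := by
        rw [hΔ_def, ENNReal.toReal_sum (fun i _ => measure_ne_top μ _)]
      rw [hΔtr]
      exact hsp
    -- one-step estimate
    have hstep : ∀ j : ℕ, μ (symmDiff (S ⁻¹' (V j)) (V (j + 1))) ≤ Δ := by
      intro j
      have h1 : S ⁻¹' (V j) = ⋃ i ∈ sh j, S ⁻¹' (c n i) := by
        simp only [hV_def, Set.preimage_iUnion]
      have hshsucc : sh (j + 1) = (sh j).image (fun i => (i + 1) % H) := by
        simp only [hsh_def, Finset.image_image]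
        apply Finset.image_congr
        intro i _
        show (i + (j + 1)) % H = ((i + j) % H + 1) % H
        rw [Nat.mod_add_mod, add_assoc]
      have h2 : V (j + 1) = ⋃ i ∈ sh j, c n ((i + 1) % H) := by
        show (⋃ i ∈ sh (j+1), c n i) = _
        rw [hshsucc, Finset.set_biUnion_finset_image]
      calc μ (symmDiff (S ⁻¹' (V j)) (V (j + 1)))
          ≤ μ (⋃ i ∈ sh j, symmDiff (S ⁻¹' (c n i)) (c n ((i + 1) % H))) := by
            rw [h1, h2]
            exact measure_mono (symmDiff_biUnion_subset _ _ _)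
        _ ≤ ∑ i ∈ sh j, μ (symmDiff (S ⁻¹' (c n i)) (c n ((i + 1) % H))) :=
            measure_biUnion_finset_le _ _
        _ ≤ Δ := Finset.sum_le_sum_of_subset (hsh_sub j)
    -- iterated estimate
    have hiter : ∀ j : ℕ, μ (symmDiff ((S^[j]) ⁻¹' U) (V j)) ≤ (j : ℝ≥0∞) * Δ := by
      intro j
      induction j with
      | zero =>
        have hsh0 : sh 0 = s := by
          simp only [hsh_def]
          have : s.image (fun i => (i + 0) % H) = s.image id :=
            Finset.image_congr (fun i hi => by
              simp [Nat.mod_eq_of_lt (mem_range.1 (hs_sub hi))])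
          rw [this, Finset.image_id]
        have hV0 : V 0 = U := by
          show (⋃ i ∈ sh 0, c n i) = U
          rw [hsh0]
        simp [hV0]
      | succ j ih =>
        have e1 : (S^[j + 1]) ⁻¹' U = S ⁻¹' ((S^[j]) ⁻¹' U) := by
          rw [Function.iterate_succ, Set.preimage_comp]
        have e2 : μ (symmDiff ((S^[j + 1]) ⁻¹' U) (S ⁻¹' (V j)))
            = μ (symmDiff ((S^[j]) ⁻¹' U) (V j)) := by
          rw [e1, ← Set.preimage_symmDiff]
          exact hS.measure_preimage
            (((hS.iterate j).measurable hUmeas).symmDiff (hVmeas j)).nullMeasurableSet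
        calc μ (symmDiff ((S^[j + 1]) ⁻¹' U) (V (j + 1)))
            ≤ μ (symmDiff ((S^[j + 1]) ⁻¹' U) (S ⁻¹' (V j)))
              + μ (symmDiff (S ⁻¹' (V j)) (V (j + 1))) := measure_symmDiff_triangle μ _ _ _
          _ ≤ (j : ℝ≥0∞) * Δ + Δ := by
              rw [e2]
              exact add_le_add (ih) (hstep j)
          _ = ((j + 1 : ℕ) : ℝ≥0∞) * Δ := by push_cast; ring
    -- V j approximates A
    have hAV : ∀ j : ℕ, j < H → (μ (symmDiff A (V j))).toReal < 2 * ε := by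
      intro j hj
      have h1 : μ (symmDiff A ((S^[j]) ⁻¹' U)) = μ (symmDiff A U) := by
        conv_lhs => rw [← hSiter j]
        rw [← Set.preimage_symmDiff]
        exact (hS.iterate j).measure_preimage (hAmeas.symmDiff hUmeas).nullMeasurableSet
      have h2 : μ (symmDiff A (V j)) ≤ μ (symmDiff A U) + (j : ℝ≥0∞) * Δ := by
        calc μ (symmDiff A (V j))
            ≤ μ (symmDiff A ((S^[j]) ⁻¹' U)) + μ (symmDiff ((S^[j]) ⁻¹' U) (V j)) :=
              measure_symmDiff_triangle μ _ _ _
          _ ≤ μ (symmDiff A U) + (j : ℝ≥0∞) * Δ := by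
              rw [h1]
              exact add_le_add le_rfl (hiter j)
      have hmul_ne : (j : ℝ≥0∞) * Δ ≠ ⊤ := ENNReal.mul_ne_top (ENNReal.natCast_ne_top j) hΔ_ne
      have h3 := ENNReal.toReal_mono
        (ENNReal.add_ne_top.2 ⟨measure_ne_top μ _, hmul_ne⟩) h2
      rw [ENNReal.toReal_add (measure_ne_top μ _) hmul_ne, ENNReal.toReal_mul,
        ENNReal.toReal_natCast] at h3
      have h4 : (j : ℝ) * Δ.toReal ≤ (H : ℝ) * Δ.toReal := by
        apply mul_le_mul_of_nonneg_right _ ENNReal.toReal_nonneg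
        exact_mod_cast hj.le
      linarith
    -- choose a good shift j
    obtain ⟨j, hjH, hjcount⟩ := existsShift H hH s hs_sub (natCount H hH s hs_sub)
    replace hjH : j < H := mem_range.1 hjH
    set k := s.card with hk_def
    have hjcount' : H * (s ∩ sh j).card ≤ k ^ 2 := hjcount
    set m := (s ∩ sh j).card with hm_def
    have hmk : m ≤ k := card_le_card inter_subset_left
    have hkH : k ≤ H := by
      calc k ≤ (Finset.range H).card := card_le_card hs_sub
        _ = H := card_range H
    -- symm diff of U and V j as a union of levels
    have hUV : symmDiff U (V j) = ⋃ i ∈ symmDiff s (sh j), c n i := by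
      ext x
      simp only [Set.mem_symmDiff]
      constructor
      · rintro (⟨hxU, hxV⟩ | ⟨hxV, hxU⟩)
        · obtain ⟨i, hi, hxi⟩ := Set.mem_iUnion₂.1 hxU
          have hins : i ∉ sh j := fun hins => hxV (Set.mem_iUnion₂.2 ⟨i, hins, hxi⟩)
          exact Set.mem_iUnion₂.2 ⟨i, Finset.mem_symmDiff.2 (Or.inl ⟨hi, hins⟩), hxi⟩
        · obtain ⟨i, hi, hxi⟩ := Set.mem_iUnion₂.1 hxV
          have hins : i ∉ s := fun hins => hxU (Set.mem_iUnion₂.2 ⟨i, hins, hxi⟩)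
          exact Set.mem_iUnion₂.2 ⟨i, Finset.mem_symmDiff.2 (Or.inr ⟨hi, hins⟩), hxi⟩
      · intro hx
        obtain ⟨i, hi, hxi⟩ := Set.mem_iUnion₂.1 hx
        have hiH : i < H := by
          rcases Finset.mem_symmDiff.1 hi with ⟨hi1, _⟩ | ⟨hi1, _⟩
          · exact mem_range.1 (hs_sub hi1)
          · exact mem_range.1 (hsh_sub j hi1)
        rcases Finset.mem_symmDiff.1 hi with ⟨hi1, hi2⟩ | ⟨hi1, hi2⟩
        · refine Or.inl ⟨Set.mem_iUnion₂.2 ⟨i, hi1, hxi⟩, ?_⟩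
          intro hxV
          obtain ⟨i', hi', hxi'⟩ := Set.mem_iUnion₂.1 hxV
          have hne : i ≠ i' := fun he => hi2 (he ▸ hi')
          exact Set.disjoint_left.1
            (hdisj n i i' hiH (mem_range.1 (hsh_sub j hi')) hne) hxi hxi'
        · refine Or.inr ⟨Set.mem_iUnion₂.2 ⟨i, hi1, hxi⟩, ?_⟩
          intro hxU
          obtain ⟨i', hi', hxi'⟩ := Set.mem_iUnion₂.1 hxU
          have hne : i ≠ i' := fun he => hi2 (he ▸ hi')
          exact Set.disjoint_left.1
            (hdisj n i i' hiH (mem_range.1 (hs_sub hi')) hne) hxi hxi'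
    have hUVsub : symmDiff s (sh j) ⊆ Finset.range H := by
      intro i hi
      rcases Finset.mem_symmDiff.1 hi with ⟨hi1, _⟩ | ⟨hi1, _⟩
      · exact hs_sub hi1
      · exact hsh_sub j hi1
    have hshcard : (sh j).card = k := by
      apply card_image_of_injOn
      intro x hx y hy hxy
      have hx' : x < H := mem_range.1 (hs_sub hx)
      have hy' : y < H := mem_range.1 (hs_sub hy)
      have hm' : Nat.ModEq H (x + j) (y + j) := hxy
      have hxy2 : x % H = y % H := Nat.ModEq.add_right_cancel (Nat.ModEq.refl j) hm'
      calc x = x % H := (Nat.mod_eq_of_lt hx').symm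
        _ = y % H := hxy2
        _ = y := Nat.mod_eq_of_lt hy'
    have hcardUV : (symmDiff s (sh j)).card = (k - m) + (k - m) := by
      rw [symmDiff_def, Finset.sup_eq_union, Finset.card_union_of_disjoint]
      · have e1 : (s \ sh j).card = k - m := by
          have := Finset.card_sdiff_add_card_inter s (sh j)
          omega
        have e2 : (sh j \ s).card = k - m := by
          have h5 := Finset.card_sdiff_add_card_inter (sh j) s
          rw [hshcard, Finset.inter_comm] at h5
          omega
        rw [e1, e2]
      · exact disjoint_sdiff_sdiff
    have hμUV : (μ (symmDiff U (V j))).toReal = (((k - m) + (k - m) : ℕ) : ℝ) / (H : ℝ) := by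
      rw [hUV, hμtR _ hUVsub, hcardUV]
    -- real-number estimates
    have hHR : (0 : ℝ) < (H : ℝ) := by exact_mod_cast hH
    have hbmR : (m : ℝ) * (H : ℝ) ≤ (k : ℝ) ^ 2 := by
      have : ((H * m : ℕ) : ℝ) ≤ ((k ^ 2 : ℕ) : ℝ) := by exact_mod_cast hjcount'
      push_cast at this
      linarith
    have lower : 2 * ((k : ℝ) / H) - 2 * ((k : ℝ) / H) ^ 2 ≤ (μ (symmDiff U (V j))).toReal := by
      rw [hμUV]
      have hc : (((k - m) + (k - m) : ℕ) : ℝ) = 2 * ((k : ℝ) - m) := by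
        have : ((k - m : ℕ) : ℝ) = (k : ℝ) - m := by
          rw [Nat.cast_sub hmk]
        push_cast [this]
        ring
      rw [hc]
      have h1 : 2 * ((k : ℝ) / H) - 2 * ((k : ℝ) / H) ^ 2
          = (2 * (k : ℝ) * H - 2 * (k : ℝ) ^ 2) / (H : ℝ) ^ 2 := by
        field_simp
      have h2 : 2 * ((k : ℝ) - m) / (H : ℝ) = (2 * ((k : ℝ) - m) * H) / (H : ℝ) ^ 2 := by
        field_simp
      rw [h1, h2]
      apply div_le_div_of_nonneg_right ?_ (by positivity)
      nlinarith
    have upper : (μ (symmDiff U (V j))).toReal < 3 * ε := by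
      have tri := measure_symmDiff_triangle μ U A (V j)
      have h3 := ENNReal.toReal_mono
        (ENNReal.add_ne_top.2 ⟨measure_ne_top μ _, measure_ne_top μ _⟩) tri
      rw [ENNReal.toReal_add (measure_ne_top μ _) (measure_ne_top μ _)] at h3
      have hcomm : μ (symmDiff U A) = μ (symmDiff A U) := by rw [symmDiff_comm]
      rw [hcomm] at h3
      have := hAV j hjH
      linarith
    have hab : |a - (k : ℝ) / H| < ε := by
      have hdiff := toReal_diff_le μ A U
      rw [hμtR s hs_sub] at hdiff
      calc |a - (k : ℝ) / H| ≤ (μ (symmDiff A U)).toReal := hdiff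
        _ < ε := hs0
    have hb0 : (0 : ℝ) ≤ (k : ℝ) / H := by positivity
    have hb1 : (k : ℝ) / H ≤ 1 := by
      rw [div_le_one hHR]
      exact_mod_cast hkH
    set b : ℝ := (k : ℝ) / H with hb_def
    have hbb : 2 * b - 2 * b ^ 2 < 3 * ε := lt_of_le_of_lt lower upper
    have hcore : 2 * a - 2 * a ^ 2 ≤ 2 * b - 2 * b ^ 2 + 2 * |a - b| := by
      have h1 : 2 * a - 2 * a ^ 2 - (2 * b - 2 * b ^ 2) = 2 * ((a - b) * (1 - (a + b))) := by
        ring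
      have h2 : (a - b) * (1 - (a + b)) ≤ |a - b| := by
        calc (a - b) * (1 - (a + b)) ≤ |(a - b) * (1 - (a + b))| := le_abs_self _
          _ = |a - b| * |1 - (a + b)| := abs_mul _ _
          _ ≤ |a - b| * 1 := by
              apply mul_le_mul_of_nonneg_left _ (abs_nonneg _)
              rw [abs_le]
              constructor <;> nlinarith
          _ = |a - b| := mul_one _
      linarith
    linarith [hcore, hbb, hab]

  -- conclude from key
  have hle : a * (1 - a) ≤ 0 := by
    by_contra h0
    push_neg at h0
    have h5 : 0 < (2 * a - 2 * a ^ 2) / 10 := by nlinarith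
    have := key _ h5
    nlinarith
  have hprod : a * (1 - a) = 0 := le_antisymm hle (by nlinarith)
  rw [eventuallyConst_set']
  rcases mul_eq_zero.1 hprod with h0 | h1
  · left
    have : μ A = 0 := by
      rcases (ENNReal.toReal_eq_zero_iff _).1 h0 with h | h
      · exact h
      · exact absurd h (measure_ne_top μ A)
    exact ae_eq_empty.2 this
  · right
    have : μ A = 1 := (ENNReal.toReal_eq_one_iff _).1 (by linarith)
    exact ae_eq_univ.2 ((prob_compl_eq_zero_iff hAmeas).2 this)
end

section
/- If an ergodic measure-preserving transformation T admits a good approximation of type (h, h+1) (two substantial towers of heights h_n and h_n+1 with approximation speed o(1/h_n)), then T has continuous spectrum, i.e., U_T has no eigenfunctions in L²₀(X,μ) other than 0. -/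
open MeasureTheory Filter ENNReal

/-- `T` admits a good approximation of type `(h, h+1)`: for each `n` there are two
towers, with levels `c₁ n i` (`i < h n`) and `c₂ n i` (`i < h n + 1`), all levels
pairwise disjoint, levels of equal measure within each tower, both towers substantial
(`height × base-measure ≥ r > 0`), the partitions into levels converge to the
decomposition into points, and the cyclic permutations of the two towers approximate
`T` with speed `o(1/h n)`. -/
def GoodApproximationTypeHH1 {X : Type*} [MeasurableSpace X] (μ : Measure X)
    (T : X → X) : Prop :=
  ∃ (h : ℕ → ℕ) (c₁ c₂ : ℕ → ℕ → Set X) (r : ℝ),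
    0 < r ∧
    (∀ n, 0 < h n) ∧
    Tendsto h atTop atTop ∧
    (∀ n i, i < h n → MeasurableSet (c₁ n i)) ∧
    (∀ n i, i < h n + 1 → MeasurableSet (c₂ n i)) ∧
    (∀ n i j, i < h n → j < h n → i ≠ j → Disjoint (c₁ n i) (c₁ n j)) ∧
    (∀ n i j, i < h n + 1 → j < h n + 1 → i ≠ j → Disjoint (c₂ n i) (c₂ n j)) ∧
    (∀ n i j, i < h n → j < h n + 1 → Disjoint (c₁ n i) (c₂ n j)) ∧
    (∀ n i j, i < h n → j < h n → μ (c₁ n i) = μ (c₁ n j)) ∧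
    (∀ n i j, i < h n + 1 → j < h n + 1 → μ (c₂ n i) = μ (c₂ n j)) ∧
    -- substantial towers
    (∀ n, (r : ℝ) ≤ (h n : ℝ) * (μ (c₁ n 0)).toReal) ∧
    (∀ n, (r : ℝ) ≤ ((h n : ℝ) + 1) * (μ (c₂ n 0)).toReal) ∧
    -- ξ_n → ε
    (∀ A : Set X, MeasurableSet A → ∀ ε : ℝ, 0 < ε → ∀ᶠ n in atTop,
      ∃ s₁ s₂ : Finset ℕ,
        (μ (symmDiff A ((⋃ i ∈ s₁.filter (· < h n), c₁ n i) ∪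
          (⋃ i ∈ s₂.filter (· < h n + 1), c₂ n i)))).toReal < ε) ∧
    -- speed of approximation o(1/h n)
    Tendsto
      (fun n => (h n : ℝ) *
        ((∑ i ∈ Finset.range (h n),
            (μ (symmDiff (T '' c₁ n i) (c₁ n ((i + 1) % h n)))).toReal) +
          ∑ i ∈ Finset.range (h n + 1),
            (μ (symmDiff (T '' c₂ n i) (c₂ n ((i + 1) % (h n + 1))))).toReal))
      atTop (nhds 0)

section KSAuxSection
open Set
set_option linter.unusedSectionVars false
set_option linter.unusedVariables false
set_option maxHeartbeats 1600000
namespace KSAux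
variable {X : Type*} [MeasurableSpace X] {μ : Measure X}



lemma img_eq (hST : Function.LeftInverse S T) (hTS : Function.RightInverse S T)
    (s : Set X) : T '' s = S ⁻¹' s := by
  ext x
  constructor
  · rintro ⟨a, ha, rfl⟩
    simpa [Set.mem_preimage, hST a] using ha
  · intro hx
    exact ⟨S x, hx, hTS x⟩

lemma meas_img (hS : MeasurePreserving S μ μ) (hST : Function.LeftInverse S T)
    (hTS : Function.RightInverse S T) {s : Set X} (hs : MeasurableSet s) :
    MeasurableSet (T '' s) := by
  rw [img_eq hST hTS]
  exact hS.measurable hs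

lemma meas_img_iter (hS : MeasurePreserving S μ μ) (hST : Function.LeftInverse S T)
    (hTS : Function.RightInverse S T) (k : ℕ) {s : Set X} (hs : MeasurableSet s) :
    MeasurableSet (T^[k] '' s) := by
  induction k with
  | zero => simpa using hs
  | succ k ih =>
    rw [Function.iterate_succ', Set.image_comp]
    exact meas_img hS hST hTS ih

lemma measure_img (hS : MeasurePreserving S μ μ) (hST : Function.LeftInverse S T)
    (hTS : Function.RightInverse S T) {s : Set X} (hs : MeasurableSet s) :
    μ (T '' s) = μ s := by
  rw [img_eq hST hTS]
  exact hS.measure_preimage hs.nullMeasurableSet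

lemma measure_img_symmDiff (hS : MeasurePreserving S μ μ) (hST : Function.LeftInverse S T)
    (hTS : Function.RightInverse S T) {A B : Set X} (hA : MeasurableSet A)
    (hB : MeasurableSet B) :
    μ (symmDiff (T '' A) (T '' B)) = μ (symmDiff A B) := by
  rw [← Set.image_symmDiff hST.injective, measure_img hS hST hTS (hA.symmDiff hB)]

lemma measure_img_symmDiff_iter (hS : MeasurePreserving S μ μ) (hST : Function.LeftInverse S T)
    (hTS : Function.RightInverse S T) (k : ℕ) {A B : Set X} (hA : MeasurableSet A)
    (hB : MeasurableSet B) :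
    μ (symmDiff (T^[k] '' A) (T^[k] '' B)) = μ (symmDiff A B) := by
  induction k with
  | zero => simp
  | succ k ih =>
    rw [Function.iterate_succ', Set.image_comp, Set.image_comp,
      measure_img_symmDiff hS hST hTS (meas_img_iter hS hST hTS k hA)
        (meas_img_iter hS hST hTS k hB), ih]

/-- cyclic tower estimate, base level -/
lemma tower_base (hS : MeasurePreserving S μ μ) (hST : Function.LeftInverse S T)
    (hTS : Function.RightInverse S T) {m : ℕ} (hm : 0 < m) {d : ℕ → Set X}
    (hd : ∀ i < m, MeasurableSet (d i)) :
    ∀ k ≤ m, μ (symmDiff (T^[k] '' d 0) (d (k % m))) ≤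
      ∑ j ∈ Finset.range k, μ (symmDiff (T '' d j) (d ((j + 1) % m))) := by
  intro k hk
  induction k with
  | zero => simp
  | succ k ih =>
    have hkm : k < m := hk
    have hkm' : k % m = k := Nat.mod_eq_of_lt hkm
    have ih' := ih (le_of_lt hkm)
    rw [hkm'] at ih'
    calc μ (symmDiff (T^[k + 1] '' d 0) (d ((k + 1) % m)))
        ≤ μ (symmDiff (T^[k + 1] '' d 0) (T '' d k)) +
            μ (symmDiff (T '' d k) (d ((k + 1) % m))) := measure_symmDiff_le _ _ _
      _ ≤ (∑ j ∈ Finset.range k, μ (symmDiff (T '' d j) (d ((j + 1) % m)))) +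
            μ (symmDiff (T '' d k) (d ((k + 1) % m))) := by
          gcongr
          rw [Function.iterate_succ', Set.image_comp,
            measure_img_symmDiff hS hST hTS (meas_img_iter hS hST hTS k (hd 0 hm))
              (hd k hkm)]
          exact ih'
      _ = ∑ j ∈ Finset.range (k + 1), μ (symmDiff (T '' d j) (d ((j + 1) % m))) := by
          rw [Finset.sum_range_succ]

/-- the main tower deviation estimate: T^[m] almost fixes every level -/
lemma tower_delta (hS : MeasurePreserving S μ μ) (hST : Function.LeftInverse S T)
    (hTS : Function.RightInverse S T) {m : ℕ} (hm : 0 < m) {d : ℕ → Set X}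
    (hd : ∀ i < m, MeasurableSet (d i)) {i : ℕ} (hi : i < m) :
    μ (symmDiff (T^[m] '' d i) (d i)) ≤
      3 * ∑ j ∈ Finset.range m, μ (symmDiff (T '' d j) (d ((j + 1) % m))) := by
  set E := ∑ j ∈ Finset.range m, μ (symmDiff (T '' d j) (d ((j + 1) % m))) with hE
  have base0 : μ (symmDiff (T^[m] '' d 0) (d 0)) ≤ E := by
    have := tower_base hS hST hTS hm hd m le_rfl
    rwa [Nat.mod_self] at this
  have basei : μ (symmDiff (T^[i] '' d 0) (d i)) ≤ E := by
    have h1 := tower_base hS hST hTS hm hd i (le_of_lt hi)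
    rw [Nat.mod_eq_of_lt hi] at h1
    refine h1.trans ?_
    exact Finset.sum_le_sum_of_subset (Finset.range_subset_range.2 (le_of_lt hi))
  have hmeasi := hd i hi
  have hmeas0 := hd 0 hm
  have hcomm : T^[m] '' (T^[i] '' d 0) = T^[i] '' (T^[m] '' d 0) := by
    rw [← Set.image_comp, ← Set.image_comp, ← Function.iterate_add, ← Function.iterate_add,
      Nat.add_comm]
  calc μ (symmDiff (T^[m] '' d i) (d i))
      ≤ μ (symmDiff (T^[m] '' d i) (T^[m] '' (T^[i] '' d 0))) +
          μ (symmDiff (T^[m] '' (T^[i] '' d 0)) (d i)) := measure_symmDiff_le _ _ _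
    _ ≤ E + μ (symmDiff (T^[m] '' (T^[i] '' d 0)) (d i)) := by
        gcongr
        rw [measure_img_symmDiff_iter hS hST hTS m hmeasi (meas_img_iter hS hST hTS i hmeas0),
          symmDiff_comm]
        exact basei
    _ ≤ E + (μ (symmDiff (T^[i] '' (T^[m] '' d 0)) (T^[i] '' d 0)) +
          μ (symmDiff (T^[i] '' d 0) (d i))) := by
        gcongr
        rw [hcomm]
        exact measure_symmDiff_le _ _ _
    _ ≤ E + (E + E) := by
        refine add_le_add le_rfl (add_le_add ?_ basei)
        rw [measure_img_symmDiff_iter hS hST hTS i (meas_img_iter hS hST hTS m hmeas0) hmeas0]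
        exact base0
    _ = 3 * E := by ring




lemma int_diff_bound [IsFiniteMeasure μ] {F : X → ℂ} {L : ℝ} (hFi : Integrable F μ)
    (hFL : ∀ᵐ x ∂μ, ‖F x‖ ≤ L) {A B : Set X} (hA : MeasurableSet A) (hB : MeasurableSet B) :
    ‖(∫ x in A, F x ∂μ) - ∫ x in B, F x ∂μ‖ ≤ L * (μ (symmDiff A B)).toReal := by
  have h1 : (∫ x in A ∩ B, F x ∂μ) + (∫ x in A \ B, F x ∂μ) = ∫ x in A, F x ∂μ :=
    integral_inter_add_diff hB hFi.integrableOn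
  have h2 : (∫ x in B ∩ A, F x ∂μ) + (∫ x in B \ A, F x ∂μ) = ∫ x in B, F x ∂μ :=
    integral_inter_add_diff hA hFi.integrableOn
  rw [Set.inter_comm B A] at h2
  have hdiff : (∫ x in A, F x ∂μ) - ∫ x in B, F x ∂μ
      = (∫ x in A \ B, F x ∂μ) - ∫ x in B \ A, F x ∂μ := by
    rw [← h1, ← h2]; ring
  have e1 : ‖∫ x in A \ B, F x ∂μ‖ ≤ L * (μ (A \ B)).toReal :=
    norm_setIntegral_le_of_norm_le_const_ae' (measure_lt_top μ _)
      (hFL.mono fun x hx _ => hx)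
  have e2 : ‖∫ x in B \ A, F x ∂μ‖ ≤ L * (μ (B \ A)).toReal :=
    norm_setIntegral_le_of_norm_le_const_ae' (measure_lt_top μ _)
      (hFL.mono fun x hx _ => hx)
  have hμ : (μ (symmDiff A B)).toReal = (μ (A \ B)).toReal + (μ (B \ A)).toReal := by
    rw [Set.symmDiff_def, measure_union disjoint_sdiff_sdiff (hB.diff hA),
      ENNReal.toReal_add (measure_ne_top _ _) (measure_ne_top _ _)]
  rw [hdiff, hμ]
  calc ‖(∫ x in A \ B, F x ∂μ) - ∫ x in B \ A, F x ∂μ‖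
      ≤ ‖∫ x in A \ B, F x ∂μ‖ + ‖∫ x in B \ A, F x ∂μ‖ := norm_sub_le _ _
    _ ≤ L * (μ (A \ B)).toReal + L * (μ (B \ A)).toReal := add_le_add e1 e2
    _ = L * ((μ (A \ B)).toReal + (μ (B \ A)).toReal) := by ring

lemma int_lower_bound [IsFiniteMeasure μ] {F : X → ℂ} {L η : ℝ} (hL : 0 < L) (hη : 0 < η)
    (hη2 : η ≤ 1 / 8) (hFi : Integrable F μ) (hFL : ∀ᵐ x ∂μ, ‖F x‖ ≤ L)
    {cs A : Set X} (hc : MeasurableSet cs) (hA : MeasurableSet A) {z : ℂ} (hz : ‖z‖ = L)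
    (hFA : ∀ x ∈ A, ‖F x - z‖ ≤ η * L)
    (hcA : (1 - η) * (μ cs).toReal ≤ (μ (cs ∩ A)).toReal) :
    L / 2 * (μ cs).toReal ≤ ‖∫ x in cs, F x ∂μ‖ := by
  set a := (μ (cs ∩ A)).toReal with hadef
  set t := (μ cs).toReal with htdef
  set b := (μ (cs \ A)).toReal with hbdef
  have hab : a + b = t := by
    rw [hadef, hbdef, htdef,
      ← ENNReal.toReal_add (measure_ne_top _ _) (measure_ne_top _ _),
      measure_inter_add_diff cs hA]
  have ha0 : 0 ≤ a := ENNReal.toReal_nonneg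
  have hb0 : 0 ≤ b := ENNReal.toReal_nonneg
  have hsplit : (∫ x in cs ∩ A, F x ∂μ) + (∫ x in cs \ A, F x ∂μ) = ∫ x in cs, F x ∂μ :=
    integral_inter_add_diff hA hFi.integrableOn
  have e2 : ‖∫ x in cs \ A, F x ∂μ‖ ≤ L * b :=
    norm_setIntegral_le_of_norm_le_const_ae' (measure_lt_top μ _)
      (hFL.mono fun x hx _ => hx)
  have hconst : (∫ _x in cs ∩ A, z ∂μ) = a • z := setIntegral_const z
  have e1 : ‖(∫ x in cs ∩ A, F x ∂μ) - a • z‖ ≤ η * L * a := by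
    rw [← hconst, ← integral_sub hFi.integrableOn
      (integrableOn_const (measure_ne_top μ _))]
    exact norm_setIntegral_le_of_norm_le_const_ae' (measure_lt_top μ _)
      (Filter.Eventually.of_forall fun x hx => hFA x hx.2)
  have hza : ‖a • z‖ = a * L := by
    rw [norm_smul, hz, Real.norm_eq_abs, abs_of_nonneg ha0]
  have e1' : (1 - η) * L * a ≤ ‖∫ x in cs ∩ A, F x ∂μ‖ := by
    have h5 := norm_sub_norm_le (a • z) (∫ x in cs ∩ A, F x ∂μ)
    rw [hza, norm_sub_rev] at h5
    linarith
  have htotal : ‖∫ x in cs ∩ A, F x ∂μ‖ - ‖∫ x in cs \ A, F x ∂μ‖ ≤ ‖∫ x in cs, F x ∂μ‖ := by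
    rw [← hsplit]
    have h4 : ‖∫ x in cs ∩ A, F x ∂μ‖ ≤
        ‖(∫ x in cs ∩ A, F x ∂μ) + ∫ x in cs \ A, F x ∂μ‖ + ‖∫ x in cs \ A, F x ∂μ‖ := by
      simpa using norm_add_le ((∫ x in cs ∩ A, F x ∂μ) + ∫ x in cs \ A, F x ∂μ)
        (-(∫ x in cs \ A, F x ∂μ))
    linarith
  -- b ≤ η t since a ≥ (1-η) t
  have hbt : b ≤ η * t := by nlinarith [ENNReal.toReal_nonneg (a := μ cs)]
  nlinarith [mul_nonneg hL.le (ENNReal.toReal_nonneg (a := μ cs)), mul_nonneg hL.le ha0,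
    mul_nonneg (mul_nonneg hη.le hL.le) (ENNReal.toReal_nonneg (a := μ cs))]




lemma good_level [IsFiniteMeasure μ] {η ε₀ r : ℝ} (hη : 0 < η) (hr : 0 < r)
    (tF : Finset ℂ) (htne : tF.Nonempty)
    (A : ℂ → Set X) (hAm : ∀ z, MeasurableSet (A z))
    (hcover : ∀ᵐ x ∂μ, ∃ z ∈ tF, x ∈ A z)
    (E : ℂ → Set X) (hEm : ∀ z ∈ tF, MeasurableSet (E z))
    (hEsmall : ∀ z ∈ tF, (μ (E z)).toReal ≤ ε₀)
    (m : ℕ) (d : ℕ → Set X) (hdm : ∀ i < m, MeasurableSet (d i))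
    (hdd : ∀ i j, i < m → j < m → i ≠ j → Disjoint (d i) (d j))
    (sel : ℂ → Finset ℕ)
    (hins : ∀ z ∈ tF, ∀ i < m, i ∈ sel z → d i \ A z ⊆ E z)
    (hout : ∀ z ∈ tF, ∀ i < m, i ∉ sel z → d i ∩ A z ⊆ E z)
    (hsum : r ≤ ∑ i ∈ Finset.range m, (μ (d i)).toReal)
    (hε₀ : max (tF.card : ℝ) (1 / η) * (tF.card : ℝ) * ε₀ < r) :
    ∃ i < m, ∃ z ∈ tF, (1 - η) * (μ (d i)).toReal ≤ (μ (d i ∩ A z)).toReal := by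
  by_contra hbad
  push_neg at hbad
  set M := max (tF.card : ℝ) (1 / η) with hM
  set K := (tF.card : ℝ) with hKdef
  have hK1 : (1 : ℝ) ≤ K := by
    rw [hKdef]
    exact_mod_cast Nat.one_le_iff_ne_zero.2 (Finset.card_ne_zero.2 htne)
  have hKM : K ≤ M := le_max_left _ _
  have hηM : 1 / η ≤ M := le_max_right _ _
  have hM0 : 0 < M := lt_of_lt_of_le (by linarith) hKM
  have key : ∀ i, i < m → (μ (d i)).toReal ≤ M * ∑ z ∈ tF, (μ (d i ∩ E z)).toReal := by
    intro i him
    have hsumne : (∑ z ∈ tF, μ (d i ∩ A z)) ≠ ∞ :=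
      (ENNReal.sum_lt_top.mpr fun z _ => measure_lt_top μ _).ne
    have cov : (μ (d i)).toReal ≤ ∑ z ∈ tF, (μ (d i ∩ A z)).toReal := by
      have h0 : μ (d i) ≤ ∑ z ∈ tF, μ (d i ∩ A z) := by
        have hsub : μ (d i) ≤ μ (⋃ z ∈ tF, d i ∩ A z) := by
          apply measure_mono_ae
          filter_upwards [hcover] with x hx hxd
          rcases hx with ⟨z, hz, hxa⟩
          exact Set.mem_biUnion hz ⟨hxd, hxa⟩
        exact hsub.trans (measure_biUnion_finset_le _ _)
      calc (μ (d i)).toReal ≤ (∑ z ∈ tF, μ (d i ∩ A z)).toReal := ENNReal.toReal_mono hsumne h0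
        _ = ∑ z ∈ tF, (μ (d i ∩ A z)).toReal :=
            ENNReal.toReal_sum fun _ _ => measure_ne_top _ _
    obtain ⟨z₀, hz₀, hz₀ge⟩ : ∃ z ∈ tF, (μ (d i)).toReal / K ≤ (μ (d i ∩ A z)).toReal := by
      by_contra hno
      push_neg at hno
      have hlt : ∑ z ∈ tF, (μ (d i ∩ A z)).toReal < ∑ _z ∈ tF, (μ (d i)).toReal / K :=
        Finset.sum_lt_sum_of_nonempty htne hno
      rw [Finset.sum_const, nsmul_eq_mul, ← hKdef] at hlt
      have : K * ((μ (d i)).toReal / K) = (μ (d i)).toReal := by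
        field_simp
      linarith
    have h5 : (μ (d i ∩ E z₀)).toReal ≤ ∑ z ∈ tF, (μ (d i ∩ E z)).toReal :=
      Finset.single_le_sum (f := fun z => (μ (d i ∩ E z)).toReal)
        (fun z _ => ENNReal.toReal_nonneg) hz₀
    have hnn : 0 ≤ (μ (d i ∩ E z₀)).toReal := ENNReal.toReal_nonneg
    by_cases hsel : i ∈ sel z₀
    · have h1 : (μ (d i ∩ A z₀)).toReal < (1 - η) * (μ (d i)).toReal := hbad i him z₀ hz₀
      have h2 : (μ (d i ∩ A z₀)).toReal + (μ (d i \ A z₀)).toReal = (μ (d i)).toReal := by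
        rw [← ENNReal.toReal_add (measure_ne_top _ _) (measure_ne_top _ _),
          measure_inter_add_diff (d i) (hAm z₀)]
      have h3 : (μ (d i \ A z₀)).toReal ≤ (μ (d i ∩ E z₀)).toReal := by
        apply ENNReal.toReal_mono (measure_ne_top _ _)
        apply measure_mono
        intro x hx
        exact ⟨hx.1, hins z₀ hz₀ i him hsel hx⟩
      have h4 : η * (μ (d i)).toReal ≤ (μ (d i ∩ E z₀)).toReal := by linarith
      calc (μ (d i)).toReal = (1 / η) * (η * (μ (d i)).toReal) := by field_simp
        _ ≤ (1 / η) * (μ (d i ∩ E z₀)).toReal := by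
            apply mul_le_mul_of_nonneg_left h4 (by positivity)
        _ ≤ M * ∑ z ∈ tF, (μ (d i ∩ E z)).toReal :=
            mul_le_mul hηM h5 hnn hM0.le
    · have h3 : (μ (d i ∩ A z₀)).toReal ≤ (μ (d i ∩ E z₀)).toReal := by
        apply ENNReal.toReal_mono (measure_ne_top _ _)
        apply measure_mono
        intro x hx
        exact ⟨hx.1, hout z₀ hz₀ i him hsel hx⟩
      have h4 : (μ (d i)).toReal ≤ K * (μ (d i ∩ E z₀)).toReal := by
        have hK0 : 0 < K := by linarith
        rw [div_le_iff₀ hK0] at hz₀ge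
        calc (μ (d i)).toReal ≤ (μ (d i ∩ A z₀)).toReal * K := hz₀ge
          _ ≤ (μ (d i ∩ E z₀)).toReal * K := by
              apply mul_le_mul_of_nonneg_right h3 hK0.le
          _ = K * (μ (d i ∩ E z₀)).toReal := by ring
      calc (μ (d i)).toReal ≤ K * (μ (d i ∩ E z₀)).toReal := h4
        _ ≤ M * ∑ z ∈ tF, (μ (d i ∩ E z)).toReal := mul_le_mul hKM h5 hnn hM0.le
  have inner : ∀ z ∈ tF, ∑ i ∈ Finset.range m, (μ (d i ∩ E z)).toReal ≤ (μ (E z)).toReal := by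
    intro z hz
    have hdisj : (↑(Finset.range m) : Set ℕ).PairwiseDisjoint fun i => d i ∩ E z := by
      intro i hi j hj hij
      have hi' : i < m := Finset.mem_range.1 (by exact_mod_cast hi)
      have hj' : j < m := Finset.mem_range.1 (by exact_mod_cast hj)
      exact (hdd i j hi' hj' hij).mono inter_subset_left inter_subset_left
    have h0 : ∑ i ∈ Finset.range m, μ (d i ∩ E z) = μ (⋃ i ∈ Finset.range m, d i ∩ E z) :=
      (measure_biUnion_finset hdisj fun i hi =>
        (hdm i (Finset.mem_range.1 hi)).inter (hEm z hz)).symm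
    have h1 : μ (⋃ i ∈ Finset.range m, d i ∩ E z) ≤ μ (E z) :=
      measure_mono (Set.iUnion₂_subset fun i _ => inter_subset_right)
    calc ∑ i ∈ Finset.range m, (μ (d i ∩ E z)).toReal
        = (∑ i ∈ Finset.range m, μ (d i ∩ E z)).toReal :=
          (ENNReal.toReal_sum fun _ _ => measure_ne_top _ _).symm
      _ ≤ (μ (E z)).toReal := by
          rw [h0]
          exact ENNReal.toReal_mono (measure_ne_top _ _) h1
  have chain : ∑ i ∈ Finset.range m, (μ (d i)).toReal ≤ M * (K * ε₀) := by
    calc ∑ i ∈ Finset.range m, (μ (d i)).toReal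
        ≤ ∑ i ∈ Finset.range m, M * ∑ z ∈ tF, (μ (d i ∩ E z)).toReal :=
          Finset.sum_le_sum fun i hi => key i (Finset.mem_range.1 hi)
      _ = M * ∑ i ∈ Finset.range m, ∑ z ∈ tF, (μ (d i ∩ E z)).toReal := by
          rw [Finset.mul_sum]
      _ = M * ∑ z ∈ tF, ∑ i ∈ Finset.range m, (μ (d i ∩ E z)).toReal := by
          rw [Finset.sum_comm]
      _ ≤ M * ∑ z ∈ tF, (μ (E z)).toReal :=
          mul_le_mul_of_nonneg_left (Finset.sum_le_sum inner) hM0.le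
      _ ≤ M * ∑ _z ∈ tF, ε₀ :=
          mul_le_mul_of_nonneg_left (Finset.sum_le_sum hEsmall) hM0.le
      _ = M * (K * ε₀) := by
          rw [Finset.sum_const, nsmul_eq_mul, ← hKdef]
  rw [← mul_assoc] at chain
  linarith

lemma tower_bound [IsProbabilityMeasure μ] {T S : X → X}
    (hT : MeasurePreserving T μ μ) (hS : MeasurePreserving S μ μ)
    (hST : Function.LeftInverse S T) (hTS : Function.RightInverse S T)
    {F : X → ℂ} (hFi : Integrable F μ) {L η : ℝ} (hL : 0 < L) (hη : 0 < η) (hη2 : η ≤ 1 / 8)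
    (hFL : ∀ᵐ x ∂μ, ‖F x‖ ≤ L)
    {c : ℂ} (himg : ∀ E : Set X, MeasurableSet E →
      (∫ x in T '' E, F x ∂μ) = c * ∫ x in E, F x ∂μ)
    {r ε₀ : ℝ} (hr : 0 < r)
    (tF : Finset ℂ) (htne : tF.Nonempty) (hzL : ∀ z ∈ tF, ‖z‖ = L)
    (A : ℂ → Set X) (hAm : ∀ z, MeasurableSet (A z))
    (hcover : ∀ᵐ x ∂μ, ∃ z ∈ tF, x ∈ A z)
    (hFA : ∀ z ∈ tF, ∀ x ∈ A z, ‖F x - z‖ ≤ η * L)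
    (E : ℂ → Set X) (hEm : ∀ z ∈ tF, MeasurableSet (E z))
    (hEsmall : ∀ z ∈ tF, (μ (E z)).toReal ≤ ε₀)
    {m : ℕ} (hm : 0 < m) {d : ℕ → Set X} (hdm : ∀ i < m, MeasurableSet (d i))
    (hdd : ∀ i j, i < m → j < m → i ≠ j → Disjoint (d i) (d j))
    (heq : ∀ i < m, μ (d i) = μ (d 0))
    (sel : ℂ → Finset ℕ)
    (hins : ∀ z ∈ tF, ∀ i < m, i ∈ sel z → d i \ A z ⊆ E z)
    (hout : ∀ z ∈ tF, ∀ i < m, i ∉ sel z → d i ∩ A z ⊆ E z)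
    (hrle : r ≤ (m : ℝ) * (μ (d 0)).toReal)
    (hε₀ : max (tF.card : ℝ) (1 / η) * (tF.card : ℝ) * ε₀ < r) :
    ‖c ^ m - 1‖ * (μ (d 0)).toReal ≤
      6 * ∑ j ∈ Finset.range m, (μ (symmDiff (T '' d j) (d ((j + 1) % m)))).toReal := by
  set δ := ∑ j ∈ Finset.range m, (μ (symmDiff (T '' d j) (d ((j + 1) % m)))).toReal with hδdef
  have hsum : r ≤ ∑ i ∈ Finset.range m, (μ (d i)).toReal := by
    have hs : ∑ i ∈ Finset.range m, (μ (d i)).toReal = (m : ℝ) * (μ (d 0)).toReal := by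
      rw [Finset.sum_congr rfl (fun i hi => by rw [heq i (Finset.mem_range.1 hi)])]
      simp [Finset.sum_const, mul_comm]
    rw [hs]
    exact hrle
  obtain ⟨i, him, z, hz, hgood⟩ :=
    good_level hη hr tF htne A hAm hcover E hEm hEsmall m d hdm hdd sel hins hout hsum hε₀
  have hgood' : (1 - η) * (μ (d i)).toReal ≤ (μ (d i ∩ A z)).toReal := hgood
  set I := ∫ x in d i, F x ∂μ with hIdef
  have hIlow : L / 2 * (μ (d i)).toReal ≤ ‖I‖ :=
    int_lower_bound hL hη hη2 hFi hFL (hdm i him) (hAm z) (hzL z hz) (hFA z hz) hgood'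
  have hiter : ∀ k, (∫ x in T^[k] '' d i, F x ∂μ) = c ^ k * I := by
    intro k
    induction k with
    | zero => simp [hIdef]
    | succ k ih =>
      rw [Function.iterate_succ', Set.image_comp,
        himg _ (meas_img_iter hS hST hTS k (hdm i him)), ih, pow_succ]
      ring
  have hdio := tower_delta hS hST hTS hm hdm him
  have hδfin : (3 : ℝ≥0∞) * ∑ j ∈ Finset.range m,
      μ (symmDiff (T '' d j) (d ((j + 1) % m))) ≠ ∞ := by
    refine ENNReal.mul_ne_top (by simp) ?_
    exact (ENNReal.sum_lt_top.mpr fun j _ => measure_lt_top μ _).ne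
  have hδ : (μ (symmDiff (T^[m] '' d i) (d i))).toReal ≤ 3 * δ := by
    have h1 := ENNReal.toReal_mono hδfin hdio
    rwa [ENNReal.toReal_mul, ENNReal.toReal_ofNat,
      ENNReal.toReal_sum (fun j _ => measure_ne_top _ _)] at h1
  have h8 : ‖c ^ m - 1‖ * ‖I‖ ≤ L * (3 * δ) := by
    have h81 : ‖c ^ m - 1‖ * ‖I‖ = ‖(∫ x in T^[m] '' d i, F x ∂μ) - I‖ := by
      rw [hiter m, ← norm_mul]
      congr 1
      ring
    rw [h81]
    calc ‖(∫ x in T^[m] '' d i, F x ∂μ) - I‖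
        ≤ L * (μ (symmDiff (T^[m] '' d i) (d i))).toReal :=
          int_diff_bound hFi hFL (meas_img_iter hS hST hTS m (hdm i him)) (hdm i him)
      _ ≤ L * (3 * δ) := mul_le_mul_of_nonneg_left hδ hL.le
  have h7 : ‖c ^ m - 1‖ * (L / 2 * (μ (d i)).toReal) ≤ ‖c ^ m - 1‖ * ‖I‖ :=
    mul_le_mul_of_nonneg_left hIlow (norm_nonneg _)
  have hc2 : ‖c ^ m - 1‖ * (μ (d 0)).toReal * (L / 2) ≤ 6 * δ * (L / 2) := by
    calc ‖c ^ m - 1‖ * (μ (d 0)).toReal * (L / 2)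
        = ‖c ^ m - 1‖ * (L / 2 * (μ (d i)).toReal) := by rw [← heq i him]; ring
      _ ≤ ‖c ^ m - 1‖ * ‖I‖ := h7
      _ ≤ L * (3 * δ) := h8
      _ = 6 * δ * (L / 2) := by ring
  exact le_of_mul_le_mul_right hc2 (by linarith : (0 : ℝ) < L / 2)


end KSAux
end KSAuxSection

set_option maxHeartbeats 1600000 in
/-- Katok–Stepin: an ergodic transformation admitting a good approximation of type
`(h, h+1)` has continuous spectrum: the Koopman operator has no eigenfunctions in
`L²₀(X,μ)` other than `0`. -/
theorem stmt_11 {X : Type*} [MeasurableSpace X] (μ : Measure X) [IsProbabilityMeasure μ]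
    (T S : X → X) (hT : MeasurePreserving T μ μ) (hS : MeasurePreserving S μ μ)
    (hST : Function.LeftInverse S T) (hTS : Function.RightInverse S T)
    (herg : Ergodic T μ)
    (U : Lp ℂ 2 μ ≃ₗᵢ[ℂ] Lp ℂ 2 μ)
    (hU : ∀ f : Lp ℂ 2 μ, (U f : X → ℂ) =ᵐ[μ] fun x => f (T x))
    (happrox : GoodApproximationTypeHH1 μ T) :
    ∀ (f : Lp ℂ 2 μ) (c : ℂ), U f = c • f → (∫ x, f x ∂μ) = 0 → f = 0 := by
  classical
  obtain ⟨h, C₁, C₂, r, hr, hpos, hhtop, m₁, m₂, dd₁, dd₂, dd₁₂, em₁, em₂, sub₁, sub₂,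
    hxi, hspeed⟩ := happrox
  intro f c hUf hint
  by_contra hfne
  set F : X → ℂ := ⇑f with hFdef
  have hFsm : StronglyMeasurable F := Lp.stronglyMeasurable f
  have hFmeas : Measurable F := hFsm.measurable
  have hFi : Integrable F μ := (Lp.memLp f).integrable (by norm_num)
  have step1 : (fun x => F (T x)) =ᵐ[μ] fun x => c * F x := by
    have h1 := hU f
    rw [hUf] at h1
    have h2 : ⇑(c • f) =ᵐ[μ] fun x => c * F x := by
      filter_upwards [Lp.coeFn_smul c f] with x hx
      simpa [smul_eq_mul] using hx
    exact h1.symm.trans h2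
  have hfnorm : ‖f‖ ≠ 0 := fun hn => hfne (norm_eq_zero.1 hn)
  have hcnorm : ‖c‖ = 1 := by
    have h1 : ‖U f‖ = ‖f‖ := U.norm_map f
    rw [hUf, norm_smul] at h1
    exact mul_right_cancel₀ hfnorm (by rw [h1, one_mul])
  haveI : (ae μ).NeBot := ae_neBot.2 (IsProbabilityMeasure.ne_zero μ)
  by_cases hc1 : c = 1
  · subst hc1
    have hinv : F ∘ T =ᵐ[μ] F := by
      refine step1.trans ?_
      filter_upwards with x
      simp
    obtain ⟨b, hb⟩ := herg.ae_eq_const_of_ae_eq_comp_ae hFsm.aestronglyMeasurable hinv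
    have hb0 : b = 0 := by
      have h2 : ∫ x, F x ∂μ = b := by
        rw [integral_congr_ae hb]
        simp
      rw [← h2, ← hint]
    apply hfne
    rw [Lp.eq_zero_iff_ae_eq_zero]
    filter_upwards [hb] with x hx
    simp [hFdef] at hx ⊢
    rw [hx, hb0]
  · -- |F| is a.e. constant
    have hnorminv : (fun x => ‖F x‖) ∘ T =ᵐ[μ] fun x => ‖F x‖ := by
      filter_upwards [step1] with x hx
      simp only [Function.comp_apply]
      rw [hx, norm_mul, hcnorm, one_mul]
    obtain ⟨L, hLe⟩ := herg.ae_eq_const_of_ae_eq_comp_ae hFmeas.norm.aestronglyMeasurable hnorminv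
    have hL0 : 0 ≤ L := by
      obtain ⟨x, hx⟩ := hLe.exists
      rw [show L = ‖F x‖ from hx.symm]
      exact norm_nonneg _
    have hLpos : 0 < L := by
      rcases hL0.lt_or_eq with hp | he0
      · exact hp
      · exfalso
        apply hfne
        rw [Lp.eq_zero_iff_ae_eq_zero]
        filter_upwards [hLe] with x hx
        have hn : ‖F x‖ = 0 := by rw [hx, ← he0]; rfl
        simpa [hFdef] using norm_eq_zero.1 hn
    have hFle : ∀ᵐ x ∂μ, ‖F x‖ ≤ L := hLe.mono fun x hx => le_of_eq hx
    -- measurable embedding and image-integral identity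
    have hTemb : MeasurableEmbedding T :=
      (MeasurableEquiv.mk ⟨T, S, hST, hTS⟩ hT.measurable hS.measurable).measurableEmbedding
    have himg : ∀ (E : Set X), MeasurableSet E →
        (∫ x in T '' E, F x ∂μ) = c * ∫ x in E, F x ∂μ := by
      intro E hE
      rw [hT.setIntegral_image_emb hTemb]
      calc (∫ x in E, F (T x) ∂μ) = ∫ x in E, c * F x ∂μ :=
            integral_congr_ae (ae_restrict_of_ae step1)
        _ = c * ∫ x in E, F x ∂μ := integral_const_mul c F
    -- finite cover of the sphere of radius L
    set η : ℝ := 1 / 8 with hηdef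
    have hη : 0 < η := by norm_num
    have hηL : 0 < η * L := by positivity
    obtain ⟨t, htsub, htfin, htcov⟩ :
        ∃ t ⊆ Metric.sphere (0 : ℂ) L, t.Finite ∧
          Metric.sphere (0 : ℂ) L ⊆ ⋃ z ∈ t, Metric.ball z (η * L) := by
      refine (isCompact_sphere (0 : ℂ) L).elim_finite_subcover_image
        (fun z _ => Metric.isOpen_ball) ?_
      intro z hz
      exact Set.mem_biUnion hz (Metric.mem_ball_self hηL)
    set tF : Finset ℂ := htfin.toFinset with htFdef
    have hmemtF : ∀ z, z ∈ tF ↔ z ∈ t := fun z => Set.Finite.mem_toFinset htfin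
    have hzL : ∀ z ∈ tF, ‖z‖ = L := by
      intro z hz
      have := htsub ((hmemtF z).1 hz)
      rwa [mem_sphere_zero_iff_norm] at this
    have hLsph : (L : ℂ) ∈ Metric.sphere (0 : ℂ) L := by
      rw [mem_sphere_zero_iff_norm, Complex.norm_real, Real.norm_eq_abs, abs_of_pos hLpos]
    have htne : tF.Nonempty := by
      obtain ⟨z, hz, -⟩ := Set.mem_iUnion₂.1 (htcov hLsph)
      exact ⟨z, (hmemtF z).2 hz⟩
    set A : ℂ → Set X := fun z => F ⁻¹' Metric.ball z (η * L) with hAdef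
    have hAm : ∀ z, MeasurableSet (A z) := fun z => hFmeas measurableSet_ball
    have hcover : ∀ᵐ x ∂μ, ∃ z ∈ tF, x ∈ A z := by
      filter_upwards [hLe] with x hx
      have hsx : F x ∈ Metric.sphere (0 : ℂ) L := by
        rw [mem_sphere_zero_iff_norm]
        exact hx
      obtain ⟨z, hz, hmem⟩ := Set.mem_iUnion₂.1 (htcov hsx)
      exact ⟨z, (hmemtF z).2 hz, hmem⟩
    have hFA : ∀ z ∈ tF, ∀ x ∈ A z, ‖F x - z‖ ≤ η * L := by
      intro z _ x hx
      have := hx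
      rw [hAdef, Set.mem_preimage, Metric.mem_ball, dist_eq_norm] at this
      exact this.le
    -- main contradiction setup
    set ε : ℝ := ‖c - 1‖ with hεdef
    have hεpos : 0 < ε := by
      rw [hεdef]
      exact norm_pos_iff.2 (sub_ne_zero.2 hc1)
    set K : ℝ := (tF.card : ℝ) with hKdef
    have hK1 : (1 : ℝ) ≤ K := by
      rw [hKdef]
      exact_mod_cast Nat.one_le_iff_ne_zero.2 (Finset.card_ne_zero.2 htne)
    set M : ℝ := max K (1 / η) with hMdef
    have hM1 : (1 : ℝ) ≤ M := le_trans hK1 (le_max_left _ _)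
    set ε₀ : ℝ := r / (M * K + 1) with hε₀def
    have hε₀pos : 0 < ε₀ := by
      rw [hε₀def]
      positivity
    have hε₀lt : M * K * ε₀ < r := by
      have hMK : (0 : ℝ) < M * K + 1 := by nlinarith
      rw [hε₀def, ← mul_div_assoc, div_lt_iff₀ hMK]
      nlinarith
    -- eventual facts
    have ev1 : ∀ᶠ n in atTop, ∀ z ∈ tF, ∃ s₁ s₂ : Finset ℕ,
        (μ (symmDiff (A z) ((⋃ i ∈ s₁.filter (· < h n), C₁ n i) ∪
          (⋃ i ∈ s₂.filter (· < h n + 1), C₂ n i)))).toReal < ε₀ := by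
      rw [eventually_all_finset]
      intro z _
      exact hxi (A z) (hAm z) ε₀ hε₀pos
    have ev2 : ∀ᶠ n in atTop, (h n : ℝ) *
        ((∑ i ∈ Finset.range (h n),
            (μ (symmDiff (T '' C₁ n i) (C₁ n ((i + 1) % h n)))).toReal) +
          ∑ i ∈ Finset.range (h n + 1),
            (μ (symmDiff (T '' C₂ n i) (C₂ n ((i + 1) % (h n + 1))))).toReal)
        < r * ε / 100 :=
      hspeed.eventually_lt_const (by positivity : (0 : ℝ) < r * ε / 100)
    obtain ⟨n, h1n, h2n⟩ := (ev1.and ev2).exists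
    set δ₁ : ℝ := ∑ i ∈ Finset.range (h n),
        (μ (symmDiff (T '' C₁ n i) (C₁ n ((i + 1) % h n)))).toReal with hδ₁def
    set δ₂ : ℝ := ∑ i ∈ Finset.range (h n + 1),
        (μ (symmDiff (T '' C₂ n i) (C₂ n ((i + 1) % (h n + 1))))).toReal with hδ₂def
    have hδ₁0 : 0 ≤ δ₁ := Finset.sum_nonneg fun _ _ => ENNReal.toReal_nonneg
    have hδ₂0 : 0 ≤ δ₂ := Finset.sum_nonneg fun _ _ => ENNReal.toReal_nonneg
    have hhn1 : (1 : ℝ) ≤ (h n : ℝ) := by exact_mod_cast hpos n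
    have spec' : ∀ z, ∃ s₁ s₂ : Finset ℕ, z ∈ tF →
        (μ (symmDiff (A z) ((⋃ i ∈ s₁.filter (· < h n), C₁ n i) ∪
          (⋃ i ∈ s₂.filter (· < h n + 1), C₂ n i)))).toReal < ε₀ := by
      intro z
      by_cases hz : z ∈ tF
      · obtain ⟨s₁, s₂, hs⟩ := h1n z hz
        exact ⟨s₁, s₂, fun _ => hs⟩
      · exact ⟨∅, ∅, fun hzz => absurd hzz hz⟩
    choose s₁f s₂f hsf using spec'
    set SS : ℂ → Set X := fun z => (⋃ i ∈ (s₁f z).filter (· < h n), C₁ n i) ∪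
        (⋃ i ∈ (s₂f z).filter (· < h n + 1), C₂ n i) with hSSdef
    set EE : ℂ → Set X := fun z => symmDiff (A z) (SS z) with hEEdef
    have hSSm : ∀ z, MeasurableSet (SS z) := by
      intro z
      refine MeasurableSet.union ?_ ?_
      · exact Finset.measurableSet_biUnion _
          (fun i hi => m₁ n i (Finset.mem_filter.1 hi).2)
      · exact Finset.measurableSet_biUnion _
          (fun i hi => m₂ n i (Finset.mem_filter.1 hi).2)
    have hEEm : ∀ z ∈ tF, MeasurableSet (EE z) := fun z _ => (hAm z).symmDiff (hSSm z)
    have hEEsmall : ∀ z ∈ tF, (μ (EE z)).toReal ≤ ε₀ := fun z hz => (hsf z hz).le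
    -- tower 1 subset facts
    have hins₁ : ∀ z ∈ tF, ∀ i < h n, i ∈ (s₁f z).filter (· < h n) →
        C₁ n i \ A z ⊆ EE z := by
      intro z hz i him hisel x hx
      have hxS : x ∈ SS z := Set.mem_union_left _ (Set.mem_biUnion hisel hx.1)
      exact Set.mem_symmDiff.2 (Or.inr ⟨hxS, hx.2⟩)
    have hout₁ : ∀ z ∈ tF, ∀ i < h n, i ∉ (s₁f z).filter (· < h n) →
        C₁ n i ∩ A z ⊆ EE z := by
      intro z hz i him hisel x hx
      have hxS : x ∉ SS z := by
        rintro (hx1 | hx2)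
        · simp only [Set.mem_iUnion] at hx1
          obtain ⟨i', hi', hxi'⟩ := hx1
          have hi'lt : i' < h n := (Finset.mem_filter.1 hi').2
          have hne : i' ≠ i := by rintro rfl; exact hisel hi'
          exact Set.disjoint_left.1 (dd₁ n i' i hi'lt him hne) hxi' hx.1
        · simp only [Set.mem_iUnion] at hx2
          obtain ⟨i', hi', hxi'⟩ := hx2
          have hi'lt : i' < h n + 1 := (Finset.mem_filter.1 hi').2
          exact Set.disjoint_left.1 (dd₁₂ n i i' him hi'lt) hx.1 hxi'
      exact Set.mem_symmDiff.2 (Or.inl ⟨hx.2, hxS⟩)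
    -- tower 2 subset facts
    have hins₂ : ∀ z ∈ tF, ∀ i < h n + 1, i ∈ (s₂f z).filter (· < h n + 1) →
        C₂ n i \ A z ⊆ EE z := by
      intro z hz i him hisel x hx
      have hxS : x ∈ SS z := Set.mem_union_right _ (Set.mem_biUnion hisel hx.1)
      exact Set.mem_symmDiff.2 (Or.inr ⟨hxS, hx.2⟩)
    have hout₂ : ∀ z ∈ tF, ∀ i < h n + 1, i ∉ (s₂f z).filter (· < h n + 1) →
        C₂ n i ∩ A z ⊆ EE z := by
      intro z hz i him hisel x hx
      have hxS : x ∉ SS z := by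
        rintro (hx1 | hx2)
        · simp only [Set.mem_iUnion] at hx1
          obtain ⟨i', hi', hxi'⟩ := hx1
          have hi'lt : i' < h n := (Finset.mem_filter.1 hi').2
          exact Set.disjoint_left.1 (dd₁₂ n i' i hi'lt him) hxi' hx.1
        · simp only [Set.mem_iUnion] at hx2
          obtain ⟨i', hi', hxi'⟩ := hx2
          have hi'lt : i' < h n + 1 := (Finset.mem_filter.1 hi').2
          have hne : i' ≠ i := by rintro rfl; exact hisel hi'
          exact Set.disjoint_left.1 (dd₂ n i' i hi'lt him hne) hxi' hx.1
      exact Set.mem_symmDiff.2 (Or.inl ⟨hx.2, hxS⟩)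
    have hη8 : η ≤ 1 / 8 := le_of_eq hηdef
    have hε₀lt' : max ((tF.card : ℝ)) (1 / η) * (tF.card : ℝ) * ε₀ < r := hε₀lt
    have hb₁ : ‖c ^ (h n) - 1‖ * (μ (C₁ n 0)).toReal ≤ 6 * δ₁ :=
      KSAux.tower_bound hT hS hST hTS hFi hLpos hη hη8 hFle himg hr tF htne hzL A hAm
        hcover hFA EE hEEm hEEsmall (hpos n) (fun i hi => m₁ n i hi)
        (fun i j hi hj hij => dd₁ n i j hi hj hij)
        (fun i hi => em₁ n i 0 hi (hpos n))
        (fun z => (s₁f z).filter (· < h n)) hins₁ hout₁ (sub₁ n) hε₀lt'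
    have hrle₂ : r ≤ ((h n + 1 : ℕ) : ℝ) * (μ (C₂ n 0)).toReal := by
      push_cast
      exact sub₂ n
    have hb₂ : ‖c ^ (h n + 1) - 1‖ * (μ (C₂ n 0)).toReal ≤ 6 * δ₂ :=
      KSAux.tower_bound hT hS hST hTS hFi hLpos hη hη8 hFle himg hr tF htne hzL A hAm
        hcover hFA EE hEEm hEEsmall (Nat.succ_pos (h n)) (fun i hi => m₂ n i hi)
        (fun i j hi hj hij => dd₂ n i j hi hj hij)
        (fun i hi => em₂ n i 0 hi (Nat.succ_pos (h n)))
        (fun z => (s₂f z).filter (· < h n + 1)) hins₂ hout₂ hrle₂ hε₀lt'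
    -- numerics
    set N₁ : ℝ := ‖c ^ (h n) - 1‖ with hN₁def
    set N₂ : ℝ := ‖c ^ (h n + 1) - 1‖ with hN₂def
    have hN₁0 : 0 ≤ N₁ := norm_nonneg _
    have hN₂0 : 0 ≤ N₂ := norm_nonneg _
    have hδsplit : (h n : ℝ) * (δ₁ + δ₂) < r * ε / 100 := h2n
    have hv₁ : r ≤ (h n : ℝ) * (μ (C₁ n 0)).toReal := sub₁ n
    have hv₂ : r ≤ ((h n : ℝ) + 1) * (μ (C₂ n 0)).toReal := sub₂ n
    have hd₁ : (h n : ℝ) * δ₁ < r * ε / 100 := by nlinarith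
    have hd₂ : (h n : ℝ) * δ₂ < r * ε / 100 := by nlinarith
    have k₁ : N₁ * r < r * ε * (6 / 100) := by
      calc N₁ * r ≤ N₁ * ((h n : ℝ) * (μ (C₁ n 0)).toReal) :=
            mul_le_mul_of_nonneg_left hv₁ hN₁0
        _ = (h n : ℝ) * (N₁ * (μ (C₁ n 0)).toReal) := by ring
        _ ≤ (h n : ℝ) * (6 * δ₁) := mul_le_mul_of_nonneg_left hb₁ (by linarith)
        _ = 6 * ((h n : ℝ) * δ₁) := by ring
        _ < 6 * (r * ε / 100) := by linarith
        _ = r * ε * (6 / 100) := by ring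
    have k₂ : N₂ * r < r * ε * (12 / 100) := by
      calc N₂ * r ≤ N₂ * (((h n : ℝ) + 1) * (μ (C₂ n 0)).toReal) :=
            mul_le_mul_of_nonneg_left hv₂ hN₂0
        _ = ((h n : ℝ) + 1) * (N₂ * (μ (C₂ n 0)).toReal) := by ring
        _ ≤ ((h n : ℝ) + 1) * (6 * δ₂) := by
            apply mul_le_mul_of_nonneg_left hb₂ (by linarith)
        _ ≤ (2 * (h n : ℝ)) * (6 * δ₂) := by nlinarith
        _ = 12 * ((h n : ℝ) * δ₂) := by ring
        _ < 12 * (r * ε / 100) := by linarith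
        _ = r * ε * (12 / 100) := by ring
    have hrε : 0 < r * ε := mul_pos hr hεpos
    have hN₁lt : N₁ < ε / 2 := by nlinarith
    have hN₂lt : N₂ < ε / 2 := by nlinarith
    have h10 : ε = ‖c ^ (h n + 1) - c ^ (h n)‖ := by
      rw [hεdef, show c ^ (h n + 1) - c ^ (h n) = c ^ (h n) * (c - 1) by ring,
        norm_mul, norm_pow, hcnorm, one_pow, one_mul]
    have h11 : ‖c ^ (h n + 1) - c ^ (h n)‖ ≤ N₂ + N₁ := by
      rw [show c ^ (h n + 1) - c ^ (h n) = (c ^ (h n + 1) - 1) - (c ^ (h n) - 1) by ring]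
      exact norm_sub_le _ _
    linarith
end
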